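/- For r ≥ 2, the intersection of the sphere {x ∈ R^r : e^T x = 1, ‖x − e/r‖² = 1/(r−1) − 1/r} with the boundary of the unit simplex Δ^r consists exactly of the r points (e − e_i)/(r−1) for i = 1,…,r, i.e. any point x of Δ^r with some zero coordinate and ‖x‖² ≤ 1/(r−1) must be of the form (e − e_i)/(r−1). -/

import Mathlib

open scoped BigOperators

/-- For `r ≥ 2`, any point of the unit simplex with a zero coordinate and
`‖x‖² ≤ 1/(r-1)` must be one of the points `(e - e_i)/(r-1)`. -/
theorem stmt3 (r : ℕ) (hr : 2 ≤ r) :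
    ∀ x : EuclideanSpace ℝ (Fin r), (∀ i, 0 ≤ x i) → ∑ i, x i = 1 →
      (∃ i, x i = 0) → ‖x‖ ^ 2 ≤ 1 / ((r : ℝ) - 1) →
      ∃ i : Fin r, x = (WithLp.equiv 2 (Fin r → ℝ)).symm
        (fun j => if j = i then 0 else 1 / ((r : ℝ) - 1)) := by
  rintro x hx hsum ⟨i, hi⟩ hnorm
  refine ⟨i, ?_⟩
  have hr2 : (2:ℝ) ≤ (r:ℝ) := by exact_mod_cast hr
  have hpos : (0:ℝ) < (r:ℝ) - 1 := by linarith
  set c : ℝ := 1 / ((r:ℝ) - 1) with hc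
  have hcpos : 0 < c := by positivity
  have hsq : ‖x‖ ^ 2 = ∑ j, (x j) ^ 2 := by
    rw [EuclideanSpace.norm_eq, Real.sq_sqrt (by positivity)]
    simp [Real.norm_eq_abs, sq_abs]
  have hcard : ((Finset.univ.erase i).card : ℝ) = (r:ℝ) - 1 := by
    rw [Finset.card_erase_of_mem (Finset.mem_univ i)]
    simp
    rw [Nat.cast_sub (by omega)]
    simp
  have hserase : ∑ j ∈ Finset.univ.erase i, x j = 1 := by
    have := Finset.sum_erase_add Finset.univ x (Finset.mem_univ i)
    rw [hsum, hi] at this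
    linarith
  have hsqerase : ∑ j ∈ Finset.univ.erase i, (x j) ^ 2 = ∑ j, (x j) ^ 2 := by
    rw [← Finset.sum_erase_add Finset.univ _ (Finset.mem_univ i), hi]
    ring
  have key : ∑ j ∈ Finset.univ.erase i, (x j - c) ^ 2 ≤ 0 := by
    have expand : ∑ j ∈ Finset.univ.erase i, (x j - c) ^ 2
        = (∑ j ∈ Finset.univ.erase i, (x j) ^ 2) - 2 * c + c ^ 2 * ((r:ℝ) - 1) := by
      rw [show (fun j => (x j - c) ^ 2) = fun j => (x j) ^ 2 - 2 * c * x j + c ^ 2 by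
        funext j; ring]
      rw [Finset.sum_add_distrib, Finset.sum_sub_distrib, ← Finset.mul_sum, hserase,
        Finset.sum_const, nsmul_eq_mul, hcard]
      ring
    have hc2 : c ^ 2 * ((r:ℝ) - 1) = c := by
      field_simp [hc]
      have h1 : c * ((r:ℝ) - 1) = 1 := by rw [hc]; exact one_div_mul_cancel hpos.ne'
      linarith
    rw [expand, hsqerase, hc2, ← hsq]
    linarith
  have hzero : ∀ j ∈ Finset.univ.erase i, (x j - c) ^ 2 = 0 := by
    rw [← Finset.sum_eq_zero_iff_of_nonneg (fun j _ => sq_nonneg _)]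
    have : 0 ≤ ∑ j ∈ Finset.univ.erase i, (x j - c) ^ 2 :=
      Finset.sum_nonneg (fun j _ => sq_nonneg _)
    linarith
  ext j
  show x j = (if j = i then 0 else c)
  by_cases hji : j = i
  · subst hji; simpa using hi
  · have := hzero j (Finset.mem_erase.2 ⟨hji, Finset.mem_univ j⟩)
    have : x j = c := by
      have := pow_eq_zero_iff (n := 2) (by norm_num) |>.mp this
      linarith
    simp [hji, this, hc]
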